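/- For the codifferential d₆ = ψ_f^{ee}, the DeCleene map θ = λ^{ef} − λ^{fe} commutes with the operator D_e on the E-component: D_e ∘ θ = θ ∘ D_e, where D_e is the E-component of the Hochschild coboundary [d₆, −] restricted to cochains with values in e, and λ^{I}(φ^J_i) = φ^{IJ}_i prepends the multi-index I. -/

import Mathlib

/-! The `E`-part of the Hochschild complex of the nilpotent codifferential
`d₆ = ψ_f^{ee}` on `W = ⟨e,f⟩` (`false = e` even, `true = f` odd):
cochains valued in `e`, the operator `D_e(φ^I_e) = (−1)^{|I|} φ^I_e ∘ ψ_f^{ee}`,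
and the DeCleene map `θ = λ^{ef} − λ^{fe}`. -/

/-- A degree-`n` multi-index of basis elements of `W`. -/
abbrev Idx (n : ℕ) := Fin n → Bool

/-- A degree-`n` cochain valued in `e`: the element `Σ_I (ε I)·φ^I_e` of `Eⁿ`. -/
abbrev ECochain (n : ℕ) := Idx n → ℂ

/-- Parity (0 or 1) of a basis element of `W`. -/
def pb (b : Bool) : ℕ := if b then 1 else 0

/-- Total parity count of a multi-index. -/
def pc {n : ℕ} (J : Idx n) : ℕ := ∑ i, pb (J i)

/-- Parity count of the length-`t` prefix of a multi-index. -/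
def pcP {n : ℕ} (J : Idx n) (t : ℕ) : ℕ :=
  ∑ i ∈ Finset.univ.filter (fun i : Fin n => i.val < t), pb (J i)

/-- The sign `(−1)^m`. -/
noncomputable def msign (m : ℕ) : ℂ := (-1) ^ m

/-- Replace the adjacent pair of entries at positions `k, k+1` of `J` by the single entry `j`. -/
def repl {n : ℕ} (J : Idx (n + 1)) (k : Fin n) (j : Bool) : Idx n :=
  fun i => if i.val < k.val then J i.castSucc else if i.val = k.val then j else J i.succ

/-- The operator `D_e : Eⁿ → Eⁿ⁺¹`, `D_e(φ^I_e) = (−1)^{|I|} φ^I_e ∘ ψ_f^{ee}`: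
the `E`-valued component of the Hochschild coboundary `[d₆, −]`, with the Koszul
insertion signs of the composition `φ ∘ ψ`. -/
noncomputable def Dehat {n : ℕ} (ε : ECochain n) : ECochain (n + 1) := fun J =>
  ∑ k : Fin n,
    msign (pc (repl J k true) + pcP J k.val) *
      ((if J k.castSucc = false ∧ J k.succ = false then (1 : ℂ) else 0) *
        ε (repl J k true))

/-- The prepending operator `λ^{ab}`, with `λ^{ab}(φ^J_e) = φ^{abJ}_e`. -/
noncomputable def lamPre (a b : Bool) {n : ℕ} (ε : ECochain n) : ECochain (n + 2) :=
  fun J => (if J 0 = a ∧ J 1 = b then (1 : ℂ) else 0) * ε (fun i => J i.succ.succ)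

/-- The DeCleene map `θ = λ^{ef} − λ^{fe}`. -/
noncomputable def theta {n : ℕ} (ε : ECochain n) : ECochain (n + 2) :=
  lamPre false true ε - lamPre true false ε

section Helpers
variable {n : ℕ}

lemma pcP_eq (J : Idx n) (t : ℕ) :
    pcP J t = ∑ i : Fin n, if i.val < t then pb (J i) else 0 := by
  rw [pcP, Finset.sum_filter]

lemma pcP_zero (J : Idx n) : pcP J 0 = 0 := by
  simp [pcP_eq]

lemma pcP_succ (J : Idx (n+1)) (t : ℕ) :
    pcP J (t+1) = pb (J 0) + pcP (fun i => J i.succ) t := by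
  simp [pcP_eq, Fin.sum_univ_succ, Nat.succ_lt_succ_iff]

lemma pc_succ (J : Idx (n+1)) :
    pc J = pb (J 0) + pc (fun i => J i.succ) := by
  simp [pc, Fin.sum_univ_succ]

lemma msign_add (a b : ℕ) : msign (a + b) = msign a * msign b := by
  simp [msign, pow_add]

lemma msign_two_mul_add (a b : ℕ) : msign (2*a + b) = msign b := by
  simp [msign, pow_add, pow_mul]

lemma repl_shift_zero (J : Idx (n+3)) (j : Fin n) :
    repl J j.succ.succ true 0 = J 0 := by
  simp [repl]

lemma repl_shift_one (J : Idx (n+3)) (j : Fin n) :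
    repl J j.succ.succ true 1 = J 1 := by
  simp [repl]

lemma repl_shift (J : Idx (n+3)) (j : Fin n) (i : Fin n) :
    repl J j.succ.succ true i.succ.succ
      = repl (fun i : Fin (n+1) => J i.succ.succ) j true i := by
  unfold repl
  rcases lt_trichotomy i.val j.val with h | h | h
  · rw [if_pos (show ((i.succ.succ : Fin (n+2)).val < (j.succ.succ : Fin (n+2)).val) by
        simp [h]), if_pos h]
    exact congrArg J (Fin.ext (by simp))
  · rw [if_neg (show ¬((i.succ.succ : Fin (n+2)).val < (j.succ.succ : Fin (n+2)).val) by
        simp [h]),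
      if_pos (show ((i.succ.succ : Fin (n+2)).val = (j.succ.succ : Fin (n+2)).val) by
        simp [h]), if_neg (by omega), if_pos h]
  · rw [if_neg (show ¬((i.succ.succ : Fin (n+2)).val < (j.succ.succ : Fin (n+2)).val) by
        simp; omega),
      if_neg (show ¬((i.succ.succ : Fin (n+2)).val = (j.succ.succ : Fin (n+2)).val) by
        simp; omega), if_neg (by omega), if_neg (by omega)]

end Helpers
section Helpers2
variable {n : ℕ}

lemma pcP_one (J : Idx (n+1)) : pcP J 1 = pb (J 0) := by
  have h := pcP_succ J 0
  rw [pcP_zero] at h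
  simpa using h

lemma pc_succ2 (K : Idx (n+2)) :
    pc K = pb (K 0) + pb (K 1) + pc (fun i : Fin n => K i.succ.succ) := by
  simp [pc, Fin.sum_univ_succ, add_assoc]

lemma pcP_succ2 (K : Idx (n+2)) (t : ℕ) :
    pcP K (t+2) = pb (K 0) + pb (K 1) + pcP (fun i : Fin n => K i.succ.succ) t := by
  rw [show t+2 = (t+1)+1 from rfl, pcP_succ, pcP_succ]
  simp [add_assoc]

lemma repl_zero_zero (J : Idx (n+3)) : repl J (0 : Fin (n+2)) true 0 = true := by
  simp [repl]

lemma repl_zero_one (J : Idx (n+3)) : repl J (0 : Fin (n+2)) true 1 = J 2 := by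
  unfold repl
  rw [if_neg (by simp), if_neg (by simp)]
  exact congrArg J (Fin.ext (by simp))

lemma repl_zero_tail (J : Idx (n+3)) (i : Fin n) :
    repl J (0 : Fin (n+2)) true i.succ.succ = J i.succ.succ.succ := by
  unfold repl
  rw [if_neg (by simp), if_neg (by simp)]

lemma repl_one_zero (J : Idx (n+3)) : repl J (1 : Fin (n+2)) true 0 = J 0 := by
  unfold repl
  rw [if_pos (by simp)]
  exact congrArg J (Fin.ext (by simp))

lemma repl_one_one (J : Idx (n+3)) : repl J (1 : Fin (n+2)) true 1 = true := by
  unfold repl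
  rw [if_neg (by simp), if_pos (by simp)]

lemma repl_one_tail (J : Idx (n+3)) (i : Fin n) :
    repl J (1 : Fin (n+2)) true i.succ.succ = J i.succ.succ.succ := by
  unfold repl
  rw [if_neg (by simp), if_neg (by simp)]

end Helpers2
/-- For `d₆ = ψ_f^{ee}`, the DeCleene map `θ = λ^{ef} − λ^{fe}` commutes with the
operator `D_e` on the `E`-complex: `D_e ∘ θ = θ ∘ D_e`. -/
theorem decleene_map_commutes_with_De :
    ∀ (n : ℕ) (ε : ECochain n), Dehat (theta ε) = theta (Dehat ε) := by
  intro n ε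
  funext J
  -- split the sum defining `Dehat (theta ε) J` into the k = 0, k = 1 and shifted parts
  have hsplit : Dehat (theta ε) J
      = (msign (pc (repl J (0 : Fin (n+2)) true) + pcP J ((0 : Fin (n+2)) : ℕ)) *
          ((if J (0 : Fin (n+2)).castSucc = false ∧ J (0 : Fin (n+2)).succ = false
              then (1:ℂ) else 0) *
            theta ε (repl J (0 : Fin (n+2)) true))
        + msign (pc (repl J (1 : Fin (n+2)) true) + pcP J ((1 : Fin (n+2)) : ℕ)) *
          ((if J (1 : Fin (n+2)).castSucc = false ∧ J (1 : Fin (n+2)).succ = false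
              then (1:ℂ) else 0) *
            theta ε (repl J (1 : Fin (n+2)) true)))
        + ∑ j : Fin n,
            msign (pc (repl J j.succ.succ true) + pcP J ((j.succ.succ : Fin (n+2)) : ℕ)) *
              ((if J (j.succ.succ : Fin (n+2)).castSucc = false
                    ∧ J (j.succ.succ : Fin (n+2)).succ = false then (1:ℂ) else 0) *
                theta ε (repl J j.succ.succ true)) := by
    rw [show Dehat (theta ε) J = ∑ k : Fin (n+2),
        msign (pc (repl J k true) + pcP J k.val) *
          ((if J k.castSucc = false ∧ J k.succ = false then (1 : ℂ) else 0) *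
            theta ε (repl J k true)) from rfl]
    simp only [Fin.sum_univ_succ, Fin.succ_zero_eq_one, add_assoc]
    rfl
  -- value of `theta ε` on `repl J 0 true` and `repl J 1 true`
  have e0 : theta ε (repl J (0 : Fin (n+2)) true)
      = -((if J 2 = false then (1:ℂ) else 0) * ε (fun i => J i.succ.succ.succ)) := by
    simp only [theta, Pi.sub_apply, lamPre, repl_zero_zero, repl_zero_one, repl_zero_tail]
    simp
  have e1 : theta ε (repl J (1 : Fin (n+2)) true)
      = (if J 0 = false then (1:ℂ) else 0) * ε (fun i => J i.succ.succ.succ) := by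
    simp only [theta, Pi.sub_apply, lamPre, repl_one_zero, repl_one_one, repl_one_tail]
    simp
  -- parity counts of `repl J 0 true` and `repl J 1 true`
  have ht0 : (fun i : Fin n => repl J (0 : Fin (n+2)) true i.succ.succ)
      = fun i => J i.succ.succ.succ := funext fun i => repl_zero_tail J i
  have ht1 : (fun i : Fin n => repl J (1 : Fin (n+2)) true i.succ.succ)
      = fun i => J i.succ.succ.succ := funext fun i => repl_one_tail J i
  have pcK0 : pc (repl J (0 : Fin (n+2)) true)
      = 1 + pb (J 2) + pc (fun i : Fin n => J i.succ.succ.succ) := by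
    rw [pc_succ2, repl_zero_zero, repl_zero_one, ht0]
    simp [pb]
  have pcK1 : pc (repl J (1 : Fin (n+2)) true)
      = pb (J 0) + 1 + pc (fun i : Fin n => J i.succ.succ.succ) := by
    rw [pc_succ2, repl_one_zero, repl_one_one, ht1]
    simp [pb]
  -- the k = 0 and k = 1 terms cancel
  have h01 : (msign (pc (repl J (0 : Fin (n+2)) true) + pcP J ((0 : Fin (n+2)) : ℕ)) *
          ((if J (0 : Fin (n+2)).castSucc = false ∧ J (0 : Fin (n+2)).succ = false
              then (1:ℂ) else 0) *
            theta ε (repl J (0 : Fin (n+2)) true))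
        + msign (pc (repl J (1 : Fin (n+2)) true) + pcP J ((1 : Fin (n+2)) : ℕ)) *
          ((if J (1 : Fin (n+2)).castSucc = false ∧ J (1 : Fin (n+2)).succ = false
              then (1:ℂ) else 0) *
            theta ε (repl J (1 : Fin (n+2)) true))) = 0 := by
    rw [e0, e1, pcK0, pcK1]
    simp only [Fin.castSucc_zero, Fin.succ_zero_eq_one, Fin.castSucc_one, Fin.succ_one_eq_two,
      Fin.val_zero, Fin.val_one, pcP_zero, pcP_one]
    by_cases h0 : J 0 = false
    · by_cases h1 : J 1 = false
      · by_cases h2 : J 2 = false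
        · simp only [h0, h1, h2, pb, if_true, if_false]
          norm_num
        · simp [h1, h2]
      · simp [h1]
    · simp [h0]
  -- the shifted terms match the right-hand side termwise
  have hterm : ∀ j : Fin n,
      msign (pc (repl J j.succ.succ true) + pcP J ((j.succ.succ : Fin (n+2)) : ℕ)) *
        ((if J (j.succ.succ : Fin (n+2)).castSucc = false
              ∧ J (j.succ.succ : Fin (n+2)).succ = false then (1:ℂ) else 0) *
          theta ε (repl J j.succ.succ true))
      = ((if J 0 = false ∧ J 1 = true then (1:ℂ) else 0)
          - (if J 0 = true ∧ J 1 = false then (1:ℂ) else 0)) *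
        (msign (pc (repl (fun i : Fin (n+1) => J i.succ.succ) j true)
            + pcP (fun i : Fin (n+1) => J i.succ.succ) (j : ℕ)) *
          ((if J j.castSucc.succ.succ = false ∧ J j.succ.succ.succ = false then (1:ℂ) else 0) *
            ε (repl (fun i : Fin (n+1) => J i.succ.succ) j true))) := by
    intro j
    have hth : theta ε (repl J j.succ.succ true)
        = ((if J 0 = false ∧ J 1 = true then (1:ℂ) else 0)
            - (if J 0 = true ∧ J 1 = false then (1:ℂ) else 0)) *
          ε (repl (fun i : Fin (n+1) => J i.succ.succ) j true) := by
      simp only [theta, Pi.sub_apply, lamPre, repl_shift_zero, repl_shift_one, repl_shift]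
      ring
    have hshift : (fun i : Fin n => repl J j.succ.succ true i.succ.succ)
        = repl (fun i : Fin (n+1) => J i.succ.succ) j true :=
      funext fun i => repl_shift J j i
    have hpc : pc (repl J j.succ.succ true)
        = pb (J 0) + pb (J 1) + pc (repl (fun i : Fin (n+1) => J i.succ.succ) j true) := by
      rw [pc_succ2, repl_shift_zero, repl_shift_one, hshift]
    have hval : ((j.succ.succ : Fin (n+2)) : ℕ) = (j : ℕ) + 2 := by simp
    have hpcP : pcP J ((j.succ.succ : Fin (n+2)) : ℕ)
        = pb (J 0) + pb (J 1) + pcP (fun i : Fin (n+1) => J i.succ.succ) (j : ℕ) := by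
      rw [hval, pcP_succ2]
    have hc : J (j.succ.succ : Fin (n+2)).castSucc = J j.castSucc.succ.succ :=
      congrArg J (Fin.ext (by simp))
    have hs : J (j.succ.succ : Fin (n+2)).succ = J j.succ.succ.succ :=
      congrArg J (Fin.ext (by simp))
    rw [hth, hpc, hpcP, hc, hs]
    rw [show pb (J 0) + pb (J 1) + pc (repl (fun i : Fin (n+1) => J i.succ.succ) j true)
          + (pb (J 0) + pb (J 1) + pcP (fun i : Fin (n+1) => J i.succ.succ) (j : ℕ))
        = 2 * (pb (J 0) + pb (J 1))
          + (pc (repl (fun i : Fin (n+1) => J i.succ.succ) j true)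
              + pcP (fun i : Fin (n+1) => J i.succ.succ) (j : ℕ)) by ring,
      msign_two_mul_add]
    ring
  -- the right-hand side as a single sum
  have hfin : theta (Dehat ε) J
      = ∑ j : Fin n,
        ((if J 0 = false ∧ J 1 = true then (1:ℂ) else 0)
            - (if J 0 = true ∧ J 1 = false then (1:ℂ) else 0)) *
          (msign (pc (repl (fun i : Fin (n+1) => J i.succ.succ) j true)
              + pcP (fun i : Fin (n+1) => J i.succ.succ) (j : ℕ)) *
            ((if J j.castSucc.succ.succ = false ∧ J j.succ.succ.succ = false then (1:ℂ) else 0) *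
              ε (repl (fun i : Fin (n+1) => J i.succ.succ) j true))) := by
    simp only [theta, Pi.sub_apply, lamPre, Dehat]
    rw [Finset.mul_sum, Finset.mul_sum, ← Finset.sum_sub_distrib]
    refine Finset.sum_congr rfl fun j _ => ?_
    ring
  rw [hsplit, Finset.sum_congr rfl fun j _ => hterm j, h01, zero_add, hfin]
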